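/- Let Γ be a graph, f ∈ Aut(Γ), and S ⊆ Aut(Γ) a subspace such that every finite partial isomorphism with an extension in S has an extension in S with only finitely many orbits. If for every finite Σ ⊆ Γ the set D_f ∩ S_Σ is dense in S_Σ, then D_f ∩ S is comeagre in S, where S_Σ = {g ∈ S : Σ is a set of orbit representatives of g}. -/

import Mathlib

open Topology

/-- The pointwise-convergence (permutation) topology on the automorphism group. -/
def autTop {V : Type*} (G : SimpleGraph V) : TopologicalSpace (G ≃g G) :=
  TopologicalSpace.induced (fun g (x : V) => g x)
    (@Pi.topologicalSpace V (fun _ => V) (fun _ => ⊥))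

section Aux

variable {V : Type*} {G : SimpleGraph V}

private lemma isOpen_basic (G : SimpleGraph V) (a b : V) :
    IsOpen[autTop G] {g : G ≃g G | g a = b} := by
  letI : TopologicalSpace V := ⊥
  haveI : DiscreteTopology V := ⟨rfl⟩
  have h1 : IsOpen {u : V → V | u a = b} := by
    have := (continuous_apply (A := fun _ : V => V) a).isOpen_preimage ({b} : Set V)
      (isOpen_discrete _)
    exact this
  exact isOpen_induced (f := fun (g : G ≃g G) (x : V) => g x) h1

private lemma isOpen_cond (G : SimpleGraph V) (p : Finset (V × V)) :
    IsOpen[autTop G] {g : G ≃g G | ∀ z ∈ p, g z.1 = z.2} := by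
  letI := autTop G
  have h : {g : G ≃g G | ∀ z ∈ p, g z.1 = z.2}
      = ⋂ z ∈ p, {g : G ≃g G | g z.1 = z.2} := by
    ext g; simp [Set.mem_iInter]
  rw [h]
  exact isOpen_biInter_finset fun z _ => isOpen_basic G z.1 z.2

private lemma core_pi (W : Set (V → V))
    (hW : IsOpen[@Pi.topologicalSpace V (fun _ => V) (fun _ => ⊥)] W)
    (u0 : V → V) (hu0 : u0 ∈ W) :
    ∃ p : Finset (V × V), (∀ z ∈ p, u0 z.1 = z.2) ∧
      ∀ u : V → V, (∀ z ∈ p, u z.1 = z.2) → u ∈ W := by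
  classical
  letI : TopologicalSpace V := ⊥
  obtain ⟨I, t, h1, h2⟩ := isOpen_pi_iff.mp hW u0 hu0
  refine ⟨I.image fun x => (x, u0 x), ?_, ?_⟩
  · intro z hz
    rw [Finset.mem_image] at hz
    obtain ⟨x, _, rfl⟩ := hz
    rfl
  · intro u hu
    apply h2
    intro x hx
    have hux : u x = u0 x := hu (x, u0 x) (Finset.mem_image_of_mem _ hx)
    rw [hux]
    exact (h1 x hx).2

private lemma dense_sub_iff (G : SimpleGraph V) (Q : (G ≃g G) → Prop)
    (T : Set {g : G ≃g G // Q g}) :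
    letI := autTop G
    (Dense T ↔ ∀ p : Finset (V × V), (∃ g, Q g ∧ ∀ z ∈ p, g z.1 = z.2) →
      ∃ g ∈ T, ∀ z ∈ p, g.1 z.1 = z.2) := by
  letI := autTop G
  constructor
  · rintro hT p ⟨g0, hQ, hg0⟩
    have hopen : IsOpen {g : {g : G ≃g G // Q g} | ∀ z ∈ p, g.1 z.1 = z.2} :=
      (isOpen_cond G p).preimage continuous_subtype_val
    obtain ⟨g, hgT, hgU⟩ := hT.exists_mem_open hopen ⟨⟨g0, hQ⟩, hg0⟩
    exact ⟨g, hgT, hgU⟩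
  · intro H
    letI : TopologicalSpace V := ⊥
    rw [dense_iff_inter_open]
    rintro U hU ⟨x, hxU⟩
    obtain ⟨U', hU', rfl⟩ := isOpen_induced_iff.mp hU
    obtain ⟨W, hW, rfl⟩ := isOpen_induced_iff.mp hU'
    obtain ⟨p, hp1, hp2⟩ := core_pi W hW (fun v => x.1 v) hxU
    obtain ⟨g, hgT, hg⟩ := H p ⟨x.1, x.2, hp1⟩
    exact ⟨g, hp2 _ hg, hgT⟩

private lemma dense_X (G : SimpleGraph V) (T : Set (G ≃g G))
    (H : ∀ p : Finset (V × V), (∃ g : G ≃g G, ∀ z ∈ p, g z.1 = z.2) →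
      ∃ g ∈ T, ∀ z ∈ p, g z.1 = z.2) :
    letI := autTop G
    Dense T := by
  letI := autTop G
  letI : TopologicalSpace V := ⊥
  rw [dense_iff_inter_open]
  rintro U hU ⟨x, hxU⟩
  obtain ⟨W, hW, rfl⟩ := isOpen_induced_iff.mp hU
  obtain ⟨p, hp1, hp2⟩ := core_pi W hW (fun v => x v) hxU
  obtain ⟨g, hgT, hg⟩ := H p ⟨x, hp1⟩
  exact ⟨g, hp2 _ hg, hgT⟩

private def piHom (G : SimpleGraph V) : (G ≃g G) →* Equiv.Perm V where
  toFun := fun h => h.toEquiv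
  map_one' := rfl
  map_mul' := fun _ _ => rfl

private lemma lift_toEquiv (f g : G ≃g G) (w : FreeGroup Bool) :
    (FreeGroup.lift (fun b : Bool => if b then f else g) w).toEquiv
      = FreeGroup.lift (fun b : Bool => if b then f.toEquiv else g.toEquiv) w := by
  have h : (piHom G).comp (FreeGroup.lift (fun b : Bool => if b then f else g))
      = FreeGroup.lift (fun b : Bool => if b then f.toEquiv else g.toEquiv) := by
    apply FreeGroup.ext_hom
    intro a
    simp only [MonoidHom.comp_apply, FreeGroup.lift_apply_of]
    cases a <;> rfl
  exact DFunLike.congr_fun h w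

private lemma mem_closure_iff_word (f g : G ≃g G) (e : Equiv.Perm V) :
    e ∈ Subgroup.closure ({f.toEquiv, g.toEquiv} : Set (Equiv.Perm V)) ↔
      ∃ w : FreeGroup Bool,
        FreeGroup.lift (fun b : Bool => if b then f.toEquiv else g.toEquiv) w = e := by
  have hr : Set.range (fun b : Bool => if b then f.toEquiv else g.toEquiv)
      = ({f.toEquiv, g.toEquiv} : Set (Equiv.Perm V)) := by
    ext u
    simp [Bool.exists_bool, eq_comm, or_comm]
  rw [← hr, ← FreeGroup.range_lift_eq_closure, MonoidHom.mem_range]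

private lemma isOpen_constAux (G : SimpleGraph V) (c : Prop) :
    IsOpen[autTop G] {_g : G ≃g G | c} := by
  letI := autTop G
  by_cases hc : c
  · have : {_g : G ≃g G | c} = Set.univ := by ext g; simpa using hc
    rw [this]; exact isOpen_univ
  · have : {_g : G ≃g G | c} = ∅ := by ext g; simpa using hc
    rw [this]; exact isOpen_empty

private lemma isOpen_eval (G : SimpleGraph V) (f : G ≃g G) (w : FreeGroup Bool) :
    ∀ x y : V, IsOpen[autTop G]
      {g : G ≃g G | (FreeGroup.lift (fun b : Bool => if b then f else g) w) x = y} := by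
  letI := autTop G
  induction w using FreeGroup.induction_on with
  | C1 =>
    intro x y
    have h : {g : G ≃g G |
        (FreeGroup.lift (fun b : Bool => if b then f else g) (1 : FreeGroup Bool)) x = y}
        = {_g : G ≃g G | x = y} := by
      ext g; simp only [Set.mem_setOf_eq, map_one]; rfl
    rw [h]; exact isOpen_constAux G _
  | of b =>
    intro x y
    have h : {g : G ≃g G |
        (FreeGroup.lift (fun b' : Bool => if b' then f else g) (FreeGroup.of b : FreeGroup Bool)) x = y}
        = {g : G ≃g G | (if b then f else g) x = y} := by
      ext g
      simp only [Set.mem_setOf_eq]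
      rw [FreeGroup.lift_apply_of]
    rw [h]
    cases b
    · simp only [Bool.false_eq_true, if_neg (by simp : ¬ (False : Prop))]
      exact isOpen_basic G x y
    · simp only [if_pos trivial]
      exact isOpen_constAux G _
  | inv_of b _ =>
    intro x y
    have h : {g : G ≃g G |
        (FreeGroup.lift (fun b' : Bool => if b' then f else g)
          ((FreeGroup.of b : FreeGroup Bool)⁻¹)) x = y}
        = {g : G ≃g G | (if b then f else g) y = x} := by
      ext g
      simp only [Set.mem_setOf_eq]
      rw [map_inv, FreeGroup.lift_apply_of]
      constructor
      · rintro rfl; exact (if b then f else g).apply_symm_apply x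
      · rintro rfl; exact (if b then f else g).symm_apply_apply y
    rw [h]
    cases b
    · simp only [Bool.false_eq_true, if_neg (by simp : ¬ (False : Prop))]
      exact isOpen_basic G y x
    · simp only [if_pos trivial]
      exact isOpen_constAux G _
  | mul w1 w2 ih1 ih2 =>
    intro x y
    have h : {g : G ≃g G |
        (FreeGroup.lift (fun b : Bool => if b then f else g) (w1 * w2)) x = y}
        = ⋃ c : V, {g : G ≃g G | (FreeGroup.lift (fun b : Bool => if b then f else g) w2) x = c}
            ∩ {g : G ≃g G | (FreeGroup.lift (fun b : Bool => if b then f else g) w1) c = y} := by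
      ext g
      simp only [Set.mem_iUnion, Set.mem_inter_iff, Set.mem_setOf_eq, map_mul]
      constructor
      · intro hgy; exact ⟨_, rfl, hgy⟩
      · rintro ⟨c, rfl, hgy⟩; exact hgy
    rw [h]
    exact isOpen_iUnion fun c => (ih2 x c).inter (ih1 c y)

private lemma exists_sig (g : G ≃g G)
    (hfin : {O : Set V | ∃ x, O = {y | Equiv.Perm.SameCycle g.toEquiv x y}}.Finite) :
    ∃ Sig : Finset V, ∀ x : V, ∃! σ, σ ∈ Sig ∧ Equiv.Perm.SameCycle g.toEquiv σ x := by
  classical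
  set e := g.toEquiv with he
  set orb : V → Set V := fun x => {y | Equiv.Perm.SameCycle e x y} with horb
  have hrep : ∀ A : hfin.toFinset, ∃ x, (A : Set V) = orb x := by
    rintro ⟨A, hA⟩
    simpa [Set.Finite.mem_toFinset] using hA
  choose r hr using hrep
  refine ⟨hfin.toFinset.attach.image r, ?_⟩
  intro x
  have hx : orb x ∈ hfin.toFinset := (Set.Finite.mem_toFinset _).mpr ⟨x, rfl⟩
  have hscx : Equiv.Perm.SameCycle e (r ⟨orb x, hx⟩) x := by
    have h1 : orb x = orb (r ⟨orb x, hx⟩) := hr ⟨orb x, hx⟩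
    have h2 : x ∈ orb x := Equiv.Perm.SameCycle.refl e x
    rw [h1] at h2
    exact h2
  refine ⟨r ⟨orb x, hx⟩, ⟨Finset.mem_image_of_mem _ (Finset.mem_attach _ _), hscx⟩, ?_⟩
  rintro σ' ⟨hσ'mem, hσ'sc⟩
  obtain ⟨⟨A, hA⟩, -, rfl⟩ := Finset.mem_image.mp hσ'mem
  have h3 : Equiv.Perm.SameCycle e (r ⟨A, hA⟩) (r ⟨orb x, hx⟩) := hσ'sc.trans hscx.symm
  have h5 : A = orb x := by
    have h2 : A = orb (r ⟨A, hA⟩) := hr ⟨A, hA⟩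
    have h4 : orb (r ⟨A, hA⟩) = orb (r ⟨orb x, hx⟩) := by
      ext z
      exact ⟨fun hz => h3.symm.trans hz, fun hz => h3.trans hz⟩
    rw [h2, h4, ← hr ⟨orb x, hx⟩]
  exact congrArg r (Subtype.ext h5)

end Aux

/-- Let Γ be a (countable) graph, f ∈ Aut(Γ), and S ⊆ Aut(Γ) such that
every finite partial isomorphism with an extension in S has an extension in S with
only finitely many orbits.  If for every finite Σ ⊆ Γ the set D_f ∩ S_Σ is dense in
S_Σ (where S_Σ is the set of g ∈ S having Σ as a set of orbit representatives and
D_f is the set of g with ⟨f,g⟩ dense in Aut(Γ)), then D_f ∩ S is comeagre in S. -/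
theorem stmt_18 {V : Type*} [Countable V] (G : SimpleGraph V) (f : G ≃g G)
    (S : Set (G ≃g G))
    (hext : ∀ (s : Finset V) (φ : V → V),
      (∃ g ∈ S, ∀ z ∈ s, g z = φ z) →
      ∃ g ∈ S, (∀ z ∈ s, g z = φ z) ∧
        {O : Set V | ∃ x, O = {y | Equiv.Perm.SameCycle g.toEquiv x y}}.Finite)
    (hdense : letI := autTop G;
      ∀ Sig : Finset V,
        Dense {g : {g : G ≃g G // g ∈ S ∧
            ∀ x : V, ∃! σ, σ ∈ Sig ∧ Equiv.Perm.SameCycle g.toEquiv σ x} |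
          Dense {h : G ≃g G | h.toEquiv ∈ Subgroup.closure
            ({f.toEquiv, g.1.toEquiv} : Set (Equiv.Perm V))}}) :
    letI := autTop G
    {g : S | Dense {h : G ≃g G | h.toEquiv ∈ Subgroup.closure
        ({f.toEquiv, g.1.toEquiv} : Set (Equiv.Perm V))}} ∈ residual S := by
  classical
  letI := autTop G
  -- countable index of "possible" finite conditions
  let ι : Type _ := {p : Finset (V × V) // ∃ h : G ≃g G, ∀ z ∈ p, h z.1 = z.2}
  haveI : Countable ι := Subtype.countable
  -- the open dense sets
  let U : ι → Set S := fun p =>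
    {g : S | ∃ h : G ≃g G, h.toEquiv ∈ Subgroup.closure
      ({f.toEquiv, g.1.toEquiv} : Set (Equiv.Perm V)) ∧ ∀ z ∈ p.1, h z.1 = z.2}
  -- openness
  have hUopen : ∀ p : ι, IsOpen (U p) := by
    intro p
    have hU : U p = ⋃ w : FreeGroup Bool,
        Subtype.val ⁻¹' {g : G ≃g G | ∀ z ∈ p.1,
          (FreeGroup.lift (fun b : Bool => if b then f else g) w) z.1 = z.2} := by
      ext g
      constructor
      · rintro ⟨h, hcl, hc⟩
        obtain ⟨w, hw⟩ := (mem_closure_iff_word f g.1 h.toEquiv).mp hcl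
        refine Set.mem_iUnion.mpr ⟨w, fun z hz => ?_⟩
        have hkey : (FreeGroup.lift (fun b : Bool => if b then f else g.1) w) z.1 = h z.1 := by
          have h1 := lift_toEquiv f g.1 w
          calc (FreeGroup.lift (fun b : Bool => if b then f else g.1) w) z.1
              = (FreeGroup.lift (fun b : Bool => if b then f else g.1) w).toEquiv z.1 := rfl
            _ = h.toEquiv z.1 := by rw [h1, hw]
            _ = h z.1 := rfl
        rw [hkey]
        exact hc z hz
      · intro hg
        obtain ⟨w, hw⟩ := Set.mem_iUnion.mp hg
        refine ⟨FreeGroup.lift (fun b : Bool => if b then f else g.1) w,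
          (mem_closure_iff_word f g.1 _).mpr ⟨w, (lift_toEquiv f g.1 w).symm⟩,
          fun z hz => hw z hz⟩
    rw [hU]
    refine isOpen_iUnion fun w => ?_
    have hin : IsOpen {g : G ≃g G | ∀ z ∈ p.1,
        (FreeGroup.lift (fun b : Bool => if b then f else g) w) z.1 = z.2} := by
      have h : {g : G ≃g G | ∀ z ∈ p.1,
          (FreeGroup.lift (fun b : Bool => if b then f else g) w) z.1 = z.2}
          = ⋂ z ∈ p.1, {g : G ≃g G |
              (FreeGroup.lift (fun b : Bool => if b then f else g) w) z.1 = z.2} := by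
        ext g; simp [Set.mem_iInter]
      rw [h]
      exact isOpen_biInter_finset fun z _ => isOpen_eval G f w z.1 z.2
    exact hin.preimage continuous_subtype_val
  -- density
  have hUdense : ∀ p : ι, Dense (U p) := by
    intro p
    refine (dense_sub_iff G (fun g => g ∈ S) (U p)).mpr ?_
    rintro q ⟨g0, hg0S, hg0q⟩
    obtain ⟨g1, hg1S, hagree, hfin⟩ :=
      hext (q.image Prod.fst) (fun v => g0 v) ⟨g0, hg0S, fun z _ => rfl⟩
    have hg1q : ∀ z ∈ q, g1 z.1 = z.2 := fun z hz => by
      rw [hagree z.1 (Finset.mem_image_of_mem _ hz)]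
      exact hg0q z hz
    obtain ⟨Sig, hSig⟩ := exists_sig g1 hfin
    have hd := (dense_sub_iff G
      (fun g => g ∈ S ∧ ∀ x : V, ∃! σ, σ ∈ Sig ∧ Equiv.Perm.SameCycle g.toEquiv σ x)
      _).mp (hdense Sig) q ⟨g1, ⟨hg1S, hSig⟩, hg1q⟩
    obtain ⟨g2, hg2D, hg2q⟩ := hd
    refine ⟨⟨g2.1, g2.2.1⟩, ?_, hg2q⟩
    obtain ⟨h0, hh0⟩ := p.2
    obtain ⟨h, hhT, hhU⟩ := hg2D.exists_mem_open (isOpen_cond G p.1) ⟨h0, hh0⟩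
    exact ⟨h, hhT, hhU⟩
  -- the intersection is contained in the target set
  have hsub : (⋂ p : ι, U p) ⊆ {g : S | Dense {h : G ≃g G | h.toEquiv ∈ Subgroup.closure
      ({f.toEquiv, g.1.toEquiv} : Set (Equiv.Perm V))}} := by
    intro g hg
    refine dense_X G _ ?_
    rintro q ⟨h0, hh0⟩
    have hq : g ∈ U ⟨q, h0, hh0⟩ := Set.mem_iInter.mp hg ⟨q, h0, hh0⟩
    obtain ⟨h, hcl, hcond⟩ := hq
    exact ⟨h, hcl, hcond⟩
  have hmem : (⋂ p : ι, U p) ∈ residual (↥S) :=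
    countable_iInter_mem.mpr fun p => residual_of_dense_open (hUopen p) (hUdense p)
  exact Filter.mem_of_superset hmem hsub
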